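/- Let F be a payment-free Shapley operator and let u ∈ ℝⁿ be a fixed point of F. Set I := argmin u = { i ∈ S : u_i = min_j u_j } and J := argmax u = { i ∈ S : u_i = max_j u_j }. Then F(𝟏_{S∖I}) ≤ 𝟏_{S∖I} and 𝟏_J ≤ F(𝟏_J). -/
import Mathlib


/-- The payment-free Shapley operator associated with transition probabilities `P`. -/
noncomputable def paymentFreeShapley {n : ℕ} {A : Fin n → Type*} {B : ∀ i, A i → Type*}
    [∀ i, Fintype (A i)] [∀ i, Nonempty (A i)]
    [∀ i a, Fintype (B i a)] [∀ i a, Nonempty (B i a)]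
    (P : ∀ i (a : A i), B i a → Fin n → ℝ) :
    (Fin n → ℝ) → (Fin n → ℝ) :=
  fun x i => ⨅ a : A i, ⨆ b : B i a, ∑ j, P i a b j * x j

/-- The indicator vector `𝟏_K` of a set of states `K`. -/
noncomputable def indic {n : ℕ} (K : Set (Fin n)) : Fin n → ℝ :=
  K.indicator fun _ => (1 : ℝ)

/-- The family `𝓕⁻ = { I ⊆ S : F(𝟏_{S∖I}) ≤ 𝟏_{S∖I} }`. -/
def Fminus {n : ℕ} (F : (Fin n → ℝ) → (Fin n → ℝ)) : Set (Set (Fin n)) :=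
  {I | F (indic Iᶜ) ≤ indic Iᶜ}

/-- The family `𝓕⁺ = { J ⊆ S : 𝟏_J ≤ F(𝟏_J) }`. -/
def Fplus {n : ℕ} (F : (Fin n → ℝ) → (Fin n → ℝ)) : Set (Set (Fin n)) :=
  {J | indic J ≤ F (indic J)}

/-- `Φ(I)`, the union of all `J ∈ 𝓕⁺` disjoint from `I`. -/
def Phi {n : ℕ} (F : (Fin n → ℝ) → (Fin n → ℝ)) (I : Set (Fin n)) : Set (Fin n) :=
  ⋃₀ {J | J ∈ Fplus F ∧ I ∩ J = ∅}

/-- `Φ*(J)`, the union of all `I ∈ 𝓕⁻` disjoint from `J`. -/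
def PhiStar {n : ℕ} (F : (Fin n → ℝ) → (Fin n → ℝ)) (J : Set (Fin n)) : Set (Fin n) :=
  ⋃₀ {I | I ∈ Fminus F ∧ I ∩ J = ∅}

section Aux

variable {n : ℕ}

lemma indic_le_one {K : Set (Fin n)} (j : Fin n) : indic K j ≤ 1 := by
  by_cases h : j ∈ K <;> simp [indic, Set.indicator, h]

lemma indic_nonneg {K : Set (Fin n)} (j : Fin n) : 0 ≤ indic K j := by
  by_cases h : j ∈ K <;> simp [indic, Set.indicator, h]

end Aux

/-- if `u` is a fixed point of a payment-free Shapley operator `F`, and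
`I = argmin u`, `J = argmax u`, then `F(𝟏_{S∖I}) ≤ 𝟏_{S∖I}` and `𝟏_J ≤ F(𝟏_J)`. -/
theorem invariant_faces_of_fixedPoint
    {n : ℕ} {A : Fin n → Type*} {B : ∀ i, A i → Type*}
    [∀ i, Fintype (A i)] [∀ i, Nonempty (A i)]
    [∀ i a, Fintype (B i a)] [∀ i a, Nonempty (B i a)]
    (P : ∀ i (a : A i), B i a → Fin n → ℝ)
    (hP0 : ∀ i a b j, 0 ≤ P i a b j)
    (hP1 : ∀ i a b, ∑ j, P i a b j = 1)
    (u : Fin n → ℝ) (hu : paymentFreeShapley P u = u) :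
    paymentFreeShapley P (indic {i : Fin n | ∀ j, u i ≤ u j}ᶜ)
        ≤ indic {i : Fin n | ∀ j, u i ≤ u j}ᶜ ∧
    indic {i : Fin n | ∀ j, u j ≤ u i}
        ≤ paymentFreeShapley P (indic {i : Fin n | ∀ j, u j ≤ u i}) := by
  set I : Set (Fin n) := {i : Fin n | ∀ j, u i ≤ u j} with hI
  set J : Set (Fin n) := {i : Fin n | ∀ j, u j ≤ u i} with hJ
  have hfix : ∀ i, (⨅ a : A i, ⨆ b : B i a, ∑ j, P i a b j * u j) = u i := fun i =>
    congrFun hu i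
  have bddA : ∀ (i) (a : A i), BddAbove (Set.range fun b : B i a => ∑ j, P i a b j * u j) :=
    fun i a => Set.Finite.bddAbove (Set.finite_range _)
  constructor
  · intro i
    by_cases hi : i ∈ I
    · have hind : indic Iᶜ i = 0 := by
        simp [indic, Set.indicator_of_notMem (Set.notMem_compl_iff.mpr hi)]
      rw [hind]
      obtain ⟨a₀, ha₀⟩ := Finite.exists_min (fun a : A i => ⨆ b : B i a, ∑ j, P i a b j * u j)
      have hle : (⨆ b : B i a₀, ∑ j, P i a₀ b j * u j) ≤ u i := by
        rw [← hfix i]; exact le_ciInf ha₀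
      have hzero : ∀ b : B i a₀, ∀ j, j ∉ I → P i a₀ b j = 0 := by
        intro b j hj
        have hb : ∑ j, P i a₀ b j * u j ≤ u i :=
          le_trans (le_ciSup (bddA i a₀) b) hle
        have hsum : ∑ k, P i a₀ b k * (u k - u i) ≤ 0 := by
          have : ∑ k, P i a₀ b k * (u k - u i)
              = (∑ k, P i a₀ b k * u k) - u i := by
            simp [mul_sub, Finset.sum_sub_distrib, ← Finset.sum_mul, hP1]
          linarith
        have hterm : ∀ k ∈ Finset.univ, 0 ≤ P i a₀ b k * (u k - u i) := fun k _ =>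
          mul_nonneg (hP0 _ _ _ _) (by linarith [hi k])
        have heq0 : ∑ k, P i a₀ b k * (u k - u i) = 0 :=
          le_antisymm hsum (Finset.sum_nonneg hterm)
        have h0 : P i a₀ b j * (u j - u i) = 0 :=
          (Finset.sum_eq_zero_iff_of_nonneg hterm).mp heq0 j (Finset.mem_univ j)
        have : u i < u j := by
          simp only [hI, Set.mem_setOf_eq, not_forall, not_le] at hj
          obtain ⟨k, hk⟩ := hj
          exact lt_of_le_of_lt (hi k) hk
        rcases mul_eq_zero.mp h0 with h | h
        · exact h
        · linarith
      refine le_trans (ciInf_le (Set.Finite.bddBelow (Set.finite_range _)) a₀) ?_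
      refine ciSup_le fun b => le_of_eq ?_
      refine Finset.sum_eq_zero fun j _ => ?_
      by_cases hjI : j ∈ I
      · simp [indic, Set.indicator_of_notMem (Set.notMem_compl_iff.mpr hjI)]
      · simp [hzero b j hjI]
    · have hind : indic Iᶜ i = 1 := by
        simp [indic, Set.indicator_of_mem (Set.mem_compl hi)]
      rw [hind]
      obtain ⟨a⟩ := ‹∀ i, Nonempty (A i)› i
      refine le_trans (ciInf_le (Set.Finite.bddBelow (Set.finite_range _)) a) ?_
      refine ciSup_le fun b => ?_
      calc ∑ j, P i a b j * indic Iᶜ j ≤ ∑ j, P i a b j := by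
            refine Finset.sum_le_sum fun j _ => ?_
            calc P i a b j * indic Iᶜ j ≤ P i a b j * 1 :=
                  mul_le_mul_of_nonneg_left (indic_le_one j) (hP0 _ _ _ _)
              _ = P i a b j := mul_one _
        _ = 1 := hP1 i a b
  · intro i
    by_cases hi : i ∈ J
    · have hind : indic J i = 1 := by simp [indic, Set.indicator_of_mem hi]
      rw [hind]
      refine le_ciInf fun a => ?_
      have hge : u i ≤ ⨆ b : B i a, ∑ j, P i a b j * u j := by
        rw [← hfix i]; exact ciInf_le (Set.Finite.bddBelow (Set.finite_range _)) a
      obtain ⟨b₀, hb₀⟩ := Finite.exists_max (fun b : B i a => ∑ j, P i a b j * u j)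
      have hb : u i ≤ ∑ j, P i a b₀ j * u j := le_trans hge (ciSup_le hb₀)
      have hzero : ∀ j, j ∉ J → P i a b₀ j = 0 := by
        intro j hj
        have hsum : 0 ≤ ∑ k, P i a b₀ k * (u k - u i) := by
          have : ∑ k, P i a b₀ k * (u k - u i)
              = (∑ k, P i a b₀ k * u k) - u i := by
            simp [mul_sub, Finset.sum_sub_distrib, ← Finset.sum_mul, hP1]
          linarith
        have hterm : ∀ k ∈ Finset.univ, 0 ≤ P i a b₀ k * (u i - u k) := fun k _ =>
          mul_nonneg (hP0 _ _ _ _) (by linarith [hi k])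
        have heq0 : ∑ k, P i a b₀ k * (u i - u k) = 0 := by
          have : ∑ k, P i a b₀ k * (u i - u k) = -∑ k, P i a b₀ k * (u k - u i) := by
            rw [← Finset.sum_neg_distrib]; congr 1; funext k; ring
          rw [this]
          have := Finset.sum_nonneg hterm
          rw [show ∑ k, P i a b₀ k * (u i - u k) = -∑ k, P i a b₀ k * (u k - u i) from by
            rw [← Finset.sum_neg_distrib]; congr 1; funext k; ring] at this
          linarith
        have h0 : P i a b₀ j * (u i - u j) = 0 :=
          (Finset.sum_eq_zero_iff_of_nonneg hterm).mp heq0 j (Finset.mem_univ j)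
        have hlt : u j < u i := by
          simp only [hJ, Set.mem_setOf_eq, not_forall, not_le] at hj
          obtain ⟨k, hk⟩ := hj
          exact lt_of_lt_of_le hk (hi k)
        rcases mul_eq_zero.mp h0 with h | h
        · exact h
        · linarith
      have hsum1 : ∑ j, P i a b₀ j * indic J j = 1 := by
        rw [← hP1 i a b₀]
        refine Finset.sum_congr rfl fun j _ => ?_
        by_cases hjJ : j ∈ J
        · simp [indic, Set.indicator_of_mem hjJ]
        · simp [hzero j hjJ]
      calc (1:ℝ) = ∑ j, P i a b₀ j * indic J j := hsum1.symm
        _ ≤ ⨆ b : B i a, ∑ j, P i a b j * indic J j :=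
            le_ciSup (f := fun b : B i a => ∑ j, P i a b j * indic J j)
              (Set.Finite.bddAbove (Set.finite_range _)) b₀
    · have hind : indic J i = 0 := by simp [indic, Set.indicator_of_notMem hi]
      rw [hind]
      refine le_ciInf fun a => ?_
      obtain ⟨b⟩ := ‹∀ i a, Nonempty (B i a)› i a
      refine le_trans ?_ (le_ciSup (Set.Finite.bddAbove (Set.finite_range _)) b)
      exact Finset.sum_nonneg fun j _ => mul_nonneg (hP0 _ _ _ _) (indic_nonneg j)
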